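/- arXiv:2411.07955 — 5 statements merged into one kernel-verified Lean document; each statement's English description precedes it below -/
import Mathlib

section
/- Refutational completeness of resolution: a formula F is unsatisfiable if and only if there exists a resolution proof of F, i.e., the empty clause ⊥ can be derived from the clauses of F by repeated application of the resolution rule. -/
open scoped Classical

noncomputable section

abbrev Var := ℕ
abbrev Lit := Var × Bool

/-- A clause: a finite set of literals containing no variable together with its negation. -/
abbrev Clause := {s : Finset Lit // ∀ v : Var, ¬((v, true) ∈ s ∧ (v, false) ∈ s)}

/-- The empty clause ⊥. -/
def emptyClause : Clause := ⟨∅, by simp⟩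

abbrev CFormula := Finset Clause
abbrev Model := Var → Bool

/-- A model satisfies a clause if some literal evaluates to true under it. -/
def SatClause (m : Model) (C : Clause) : Prop := ∃ l ∈ C.1, m l.1 = l.2

/-- A model satisfies a formula if it satisfies every clause. -/
def SatFormula (m : Model) (F : CFormula) : Prop := ∀ C ∈ F, SatClause m C

def Satisfiable (F : CFormula) : Prop := ∃ m, SatFormula m F

def Unsat (F : CFormula) : Prop := ¬ Satisfiable F

/-- `IsResolvent A B R` : `R = A ⋄ B` with some pivot variable `x`: `x ∈ A`, `x̄ ∈ B`,
no other variable occurs with opposite polarities in `A` and `B`, and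
`R = (A ∖ {x}) ∪ (B ∖ {x̄})`. -/
def IsResolvent (A B R : Clause) : Prop :=
  ∃ x : Var, (x, true) ∈ A.1 ∧ (x, false) ∈ B.1 ∧
    (∀ y : Var,
      (((y, true) ∈ A.1 ∧ (y, false) ∈ B.1) ∨ ((y, false) ∈ A.1 ∧ (y, true) ∈ B.1)) → y = x) ∧
    R.1 = (A.1.erase (x, true)) ∪ (B.1.erase (x, false))

/-- A resolution proof of `F`: a nonempty sequence of clauses ending in the empty clause
where each entry is an axiom (a clause of `F`) or a resolvent of two earlier entries. -/
def IsResProof (F : CFormula) (Q : List Clause) : Prop :=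
  Q ≠ [] ∧ Q.getLast? = some emptyClause ∧
  ∀ i : Fin Q.length, Q.get i ∈ F ∨
    ∃ j k : Fin Q.length, j < i ∧ k < i ∧ IsResolvent (Q.get j) (Q.get k) (Q.get i)

/-- `layersUpTo L j = L⁰ ∪ ⋯ ∪ L^{j-1}`. -/
def layersUpTo (L : List CFormula) (j : ℕ) : CFormula :=
  (Finset.range j).biUnion fun i => L.getD i ∅

/-- `tailUnion L = L¹ ∪ ⋯ ∪ Lⁿ`. -/
def tailUnion (L : List CFormula) : CFormula :=
  (Finset.Ico 1 L.length).biUnion fun i => L.getD i ∅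

/-- A layer list on `F`: initialization, termination, consistency, take-it-or-leave-it. -/
def IsLayerList (F : CFormula) (L : List CFormula) : Prop :=
  L.head? = some F ∧
  (∃ k, 1 ≤ k ∧ k < L.length ∧ emptyClause ∈ L.getD k ∅) ∧
  (∀ j, 1 ≤ j → j < L.length → ∀ ω ∈ L.getD j ∅,
      ∃ ω' ∈ L.getD (j - 1) ∅, ∃ ω'' ∈ layersUpTo L j, IsResolvent ω' ω'' ω) ∧
  (∀ k j, 1 ≤ k → k < j → j < L.length → ∀ ω ∈ L.getD j ∅,
      ¬ ∃ ω' ∈ L.getD (k - 1) ∅, ∃ ω'' ∈ layersUpTo L k, IsResolvent ω' ω'' ω)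

/-- The length of a layer list: the total number of clauses in all its layers. -/
def llLength (L : List CFormula) : ℕ := (L.map Finset.card).sum

/-- The frontier of `F`: clauses of `F` not strictly containing another clause of `F`. -/
def Frontier (F : CFormula) : CFormula := F.filter fun ω => ¬ ∃ ω' ∈ F, ω'.1 ⊂ ω.1

/-- A subproblem: previous, current, next and forgotten clause sets. -/
structure Subproblem where
  previous : CFormula
  current : CFormula
  next : CFormula
  forgotten : CFormula

/-- The known clauses of a subproblem. -/
def Subproblem.known (P : Subproblem) : CFormula := P.previous ∪ P.current ∪ P.next

/-- A compatible proof of a subproblem `P`: a layer list on `F` such that for some `k`,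
`L^k = Current(P)`, `L⁰ ∪ ⋯ ∪ L^{k-1} = Previous(P)`, `L^{k+1} ⊇ Next(P)`, and no
forgotten clause occurs in any layer. -/
def CompatibleProof (F : CFormula) (P : Subproblem) (L : List CFormula) : Prop :=
  IsLayerList F L ∧
  (∃ k, k < L.length ∧ L.getD k ∅ = P.current ∧ layersUpTo L k = P.previous ∧
      P.next ⊆ L.getD (k + 1) ∅) ∧
  ∀ ω ∈ P.forgotten, ω ∉ layersUpTo L L.length


/-! ### Auxiliary development -/

/-- Derivability of a clause by resolution from `F`. -/
inductive Deriv (F : CFormula) : Clause → Prop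
  | ax {C : Clause} : C ∈ F → Deriv F C
  | res {A B C : Clause} : Deriv F A → Deriv F B → IsResolvent A B C → Deriv F C

lemma sat_resolvent {m : Model} {A B R : Clause} (h : IsResolvent A B R)
    (hA : SatClause m A) (hB : SatClause m B) : SatClause m R := by
  obtain ⟨x, hxA, hxB, -, hR⟩ := h
  obtain ⟨l, hl, hml⟩ := hA
  by_cases hlx : l = (x, true)
  · obtain ⟨l', hl', hml'⟩ := hB
    by_cases hl'x : l' = (x, false)
    · exfalso
      subst hlx; subst hl'x
      simp only at hml hml'
      rw [hml] at hml'
      exact Bool.noConfusion hml'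
    · exact ⟨l', by rw [hR]; exact Finset.mem_union_right _ (Finset.mem_erase.2 ⟨hl'x, hl'⟩), hml'⟩
  · exact ⟨l, by rw [hR]; exact Finset.mem_union_left _ (Finset.mem_erase.2 ⟨hlx, hl⟩), hml⟩

lemma deriv_sound {F : CFormula} {C : Clause} (h : Deriv F C) {m : Model}
    (hm : SatFormula m F) : SatClause m C := by
  induction h with
  | ax hC => exact hm _ hC
  | res _ _ hres ihA ihB => exact sat_resolvent hres ihA ihB

/-- The variables occurring in a formula. -/
def varsF (F : CFormula) : Finset Var := F.biUnion fun C => C.1.image Prod.fst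

/-- Erase a literal from a clause. -/
def Clause.eraseLit (C : Clause) (l : Lit) : Clause :=
  ⟨C.1.erase l, fun v hv =>
    C.2 v ⟨Finset.mem_of_mem_erase hv.1, Finset.mem_of_mem_erase hv.2⟩⟩

/-- Restriction of `F` by setting variable `x` to `b`. -/
def restrict (F : CFormula) (x : Var) (b : Bool) : CFormula :=
  (F.filter fun C => (x, b) ∉ C.1).image fun C => C.eraseLit (x, !b)

lemma unsat_restrict {F : CFormula} (hF : Unsat F) (x : Var) (b : Bool) :
    Unsat (restrict F x b) := by
  rintro ⟨m, hm⟩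
  refine hF ⟨fun v => if v = x then b else m v, ?_⟩
  intro C hC
  by_cases hxb : (x, b) ∈ C.1
  · exact ⟨(x, b), hxb, by simp⟩
  · have hC' : C.eraseLit (x, !b) ∈ restrict F x b :=
      Finset.mem_image.2 ⟨C, Finset.mem_filter.2 ⟨hC, hxb⟩, rfl⟩
    obtain ⟨l, hl, hml⟩ := hm _ hC'
    have hl' : l ∈ C.1.erase (x, !b) := hl
    have hlC : l ∈ C.1 := Finset.mem_of_mem_erase hl'
    have hlne : l ≠ (x, !b) := Finset.ne_of_mem_erase hl'
    refine ⟨l, hlC, ?_⟩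
    by_cases hlx : l.1 = x
    · exfalso
      have : l = (x, l.2) := by rw [← hlx]
      rcases Bool.eq_or_eq_not l.2 b with h2 | h2
      · exact hxb (by rw [h2] at this; rw [← this]; exact hlC)
      · exact hlne (by rw [h2] at this; exact this)
    · simpa [hlx] using hml

lemma varsF_restrict {F : CFormula} {x : Var} (b : Bool) :
    varsF (restrict F x b) ⊆ (varsF F).erase x := by
  intro v hv
  obtain ⟨C, hC, hvC⟩ := Finset.mem_biUnion.1 hv
  obtain ⟨l, hl, hlv⟩ := Finset.mem_image.1 hvC
  obtain ⟨D, hD, hDC⟩ := Finset.mem_image.1 hC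
  have hDF : D ∈ F := (Finset.mem_filter.1 hD).1
  have hDxb : (x, b) ∉ D.1 := (Finset.mem_filter.1 hD).2
  have hlD : l ∈ D.1.erase (x, !b) := by rw [← hDC] at hl; exact hl
  refine Finset.mem_erase.2 ⟨?_, Finset.mem_biUnion.2 ⟨D, hDF,
    Finset.mem_image.2 ⟨l, Finset.mem_of_mem_erase hlD, hlv⟩⟩⟩
  intro hvx
  have hlx : l = (x, l.2) := by rw [← hvx, ← hlv]
  rcases Bool.eq_or_eq_not l.2 b with h2 | h2
  · exact hDxb (by rw [h2] at hlx; rw [← hlx]; exact Finset.mem_of_mem_erase hlD)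
  · exact Finset.ne_of_mem_erase hlD (by rw [h2] at hlx; exact hlx)

lemma deriv_xfree {G : CFormula} {x : Var}
    (hG : ∀ C ∈ G, ∀ b : Bool, (x, b) ∉ C.1) {C : Clause} (h : Deriv G C) :
    ∀ b : Bool, (x, b) ∉ C.1 := by
  induction h with
  | ax hC => exact hG _ hC
  | res _ _ hres ihA ihB =>
    obtain ⟨y, -, -, -, hR⟩ := hres
    intro b hb
    rw [hR] at hb
    rcases Finset.mem_union.1 hb with h | h
    · exact ihA b (Finset.mem_of_mem_erase h)
    · exact ihB b (Finset.mem_of_mem_erase h)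

lemma restrict_xfree (F : CFormula) (x : Var) (b : Bool) :
    ∀ C ∈ restrict F x b, ∀ c : Bool, (x, c) ∉ C.1 := by
  intro C hC c hc
  obtain ⟨D, hD, hDC⟩ := Finset.mem_image.1 hC
  have hDxb : (x, b) ∉ D.1 := (Finset.mem_filter.1 hD).2
  have hc' : (x, c) ∈ D.1.erase (x, !b) := by rw [← hDC] at hc; exact hc
  rcases Bool.eq_or_eq_not c b with h2 | h2
  · exact hDxb (by rw [← h2]; exact Finset.mem_of_mem_erase hc')
  · exact Finset.ne_of_mem_erase hc' (by rw [h2])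

/-- Lifting lemma: a derivation from the restricted formula lifts to a derivation
from `F` of a clause between `C` and `C ∪ {(x, !b)}`. -/
lemma deriv_lift {F : CFormula} {x : Var} {b : Bool} {C : Clause}
    (h : Deriv (restrict F x b) C) :
    ∃ D : Clause, Deriv F D ∧ C.1 ⊆ D.1 ∧ D.1 ⊆ insert (x, !b) C.1 := by
  induction h with
  | ax hC =>
    obtain ⟨D, hD, hDC⟩ := Finset.mem_image.1 hC
    refine ⟨D, Deriv.ax (Finset.mem_filter.1 hD).1, ?_, ?_⟩
    · rw [← hDC]; exact Finset.erase_subset _ _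
    · intro l hl
      rcases eq_or_ne l (x, !b) with h2 | h2
      · exact Finset.mem_insert.2 (Or.inl h2)
      · exact Finset.mem_insert.2 (Or.inr (by rw [← hDC]; exact Finset.mem_erase.2 ⟨h2, hl⟩))
  | @res A B C hA hB hres ihA ihB =>
    obtain ⟨A', hA', hAA', hA'A⟩ := ihA
    obtain ⟨B', hB', hBB', hB'B⟩ := ihB
    obtain ⟨y, hyA, hyB, huniq, hC⟩ := hres
    have hAx : ∀ c : Bool, (x, c) ∉ A.1 := deriv_xfree (restrict_xfree F x b) hA
    have hBx : ∀ c : Bool, (x, c) ∉ B.1 := deriv_xfree (restrict_xfree F x b) hB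
    have hCx : ∀ c : Bool, (x, c) ∉ C.1 := deriv_xfree (restrict_xfree F x b)
      (Deriv.res hA hB ⟨y, hyA, hyB, huniq, hC⟩)
    have hyx : y ≠ x := fun hyx => hAx true (hyx ▸ hyA)
    -- membership characterization for A' and B'
    have hA'mem : ∀ l ∈ A'.1, l ∈ A.1 ∨ l = (x, !b) := by
      intro l hl
      rcases Finset.mem_insert.1 (hA'A hl) with h2 | h2
      · exact Or.inr h2
      · exact Or.inl h2
    have hB'mem : ∀ l ∈ B'.1, l ∈ B.1 ∨ l = (x, !b) := by
      intro l hl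
      rcases Finset.mem_insert.1 (hB'B hl) with h2 | h2
      · exact Or.inr h2
      · exact Or.inl h2
    -- the lifted resolvent
    set E : Finset Lit := (A'.1.erase (y, true)) ∪ (B'.1.erase (y, false)) with hE
    have hEvalid : ∀ v : Var, ¬((v, true) ∈ E ∧ (v, false) ∈ E) := by
      rintro v ⟨hvt, hvf⟩
      have hvt' := Finset.mem_union.1 hvt
      have hvf' := Finset.mem_union.1 hvf
      rcases hvt' with ht | ht <;> rcases hvf' with hf | hf
      · exact A'.2 v ⟨Finset.mem_of_mem_erase ht, Finset.mem_of_mem_erase hf⟩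
      · -- (v,true) ∈ A', (v,false) ∈ B'
        have hvy : v ≠ y := fun h => Finset.ne_of_mem_erase ht (by rw [h])
        rcases hA'mem _ (Finset.mem_of_mem_erase ht) with h1 | h1
        · rcases hB'mem _ (Finset.mem_of_mem_erase hf) with h2 | h2
          · exact hvy (huniq v (Or.inl ⟨h1, h2⟩))
          · have : v = x := congrArg Prod.fst h2
            exact hAx true (this ▸ h1)
        · rcases hB'mem _ (Finset.mem_of_mem_erase hf) with h2 | h2
          · have : v = x := congrArg Prod.fst h1
            exact hBx false (this ▸ h2)
          · have e1 : (true : Bool) = !b := congrArg Prod.snd h1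
            have e2 : (false : Bool) = !b := congrArg Prod.snd h2
            exact Bool.noConfusion (e1.trans e2.symm)
      · -- (v,true) ∈ B', (v,false) ∈ A'
        rcases hA'mem _ (Finset.mem_of_mem_erase hf) with h1 | h1
        · rcases hB'mem _ (Finset.mem_of_mem_erase ht) with h2 | h2
          · -- both literals survive into C, contradicting validity of C
            refine C.2 v ⟨?_, ?_⟩
            · rw [hC]
              exact Finset.mem_union_right _
                (Finset.mem_erase.2 ⟨Finset.ne_of_mem_erase ht, h2⟩)
            · rw [hC]
              exact Finset.mem_union_left _
                (Finset.mem_erase.2 ⟨Finset.ne_of_mem_erase hf, h1⟩)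
          · have hvx : v = x := congrArg Prod.fst h2
            exact hAx false (hvx ▸ h1)
        · rcases hB'mem _ (Finset.mem_of_mem_erase ht) with h2 | h2
          · have hvx : v = x := congrArg Prod.fst h1
            exact hBx true (hvx ▸ h2)
          · have e1 : (false : Bool) = !b := congrArg Prod.snd h1
            have e2 : (true : Bool) = !b := congrArg Prod.snd h2
            exact Bool.noConfusion (e1.trans e2.symm)
      · exact B'.2 v ⟨Finset.mem_of_mem_erase ht, Finset.mem_of_mem_erase hf⟩
    refine ⟨⟨E, hEvalid⟩, Deriv.res hA' hB' ⟨y, hAA' hyA, hBB' hyB, ?_, rfl⟩, ?_, ?_⟩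
    · -- uniqueness of the pivot for A', B'
      intro v hv
      rcases hv with ⟨h1, h2⟩ | ⟨h1, h2⟩
      · rcases hA'mem _ h1 with h1' | h1' <;> rcases hB'mem _ h2 with h2' | h2'
        · exact huniq v (Or.inl ⟨h1', h2'⟩)
        · have hvx : v = x := congrArg Prod.fst h2'
          exact absurd (hvx ▸ h1') (hAx true)
        · have hvx : v = x := congrArg Prod.fst h1'
          exact absurd (hvx ▸ h2') (hBx false)
        · exact Bool.noConfusion ((congrArg Prod.snd h1').trans (congrArg Prod.snd h2').symm)
      · rcases hA'mem _ h1 with h1' | h1' <;> rcases hB'mem _ h2 with h2' | h2'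
        · exact huniq v (Or.inr ⟨h1', h2'⟩)
        · have hvx : v = x := congrArg Prod.fst h2'
          exact absurd (hvx ▸ h1') (hAx false)
        · have hvx : v = x := congrArg Prod.fst h1'
          exact absurd (hvx ▸ h2') (hBx true)
        · exact Bool.noConfusion ((congrArg Prod.snd h1').trans (congrArg Prod.snd h2').symm)
    · -- C.1 ⊆ E
      rw [hC]
      refine Finset.union_subset ?_ ?_
      · intro l hl
        exact Finset.mem_union_left _
          (Finset.mem_erase.2 ⟨(Finset.mem_erase.1 hl).1, hAA' (Finset.mem_of_mem_erase hl)⟩)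
      · intro l hl
        exact Finset.mem_union_right _
          (Finset.mem_erase.2 ⟨(Finset.mem_erase.1 hl).1, hBB' (Finset.mem_of_mem_erase hl)⟩)
    · -- E ⊆ insert (x,!b) C.1
      intro l hl
      rcases Finset.mem_union.1 hl with h1 | h1
      · rcases hA'mem _ (Finset.mem_of_mem_erase h1) with h2 | h2
        · exact Finset.mem_insert.2 (Or.inr (by
            rw [hC]
            exact Finset.mem_union_left _ (Finset.mem_erase.2 ⟨(Finset.mem_erase.1 h1).1, h2⟩)))
        · exact Finset.mem_insert.2 (Or.inl h2)
      · rcases hB'mem _ (Finset.mem_of_mem_erase h1) with h2 | h2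
        · exact Finset.mem_insert.2 (Or.inr (by
            rw [hC]
            exact Finset.mem_union_right _ (Finset.mem_erase.2 ⟨(Finset.mem_erase.1 h1).1, h2⟩)))
        · exact Finset.mem_insert.2 (Or.inl h2)

lemma clause_vars_sub {F : CFormula} {C : Clause} (hC : C ∈ F) {l : Lit} (hl : l ∈ C.1) :
    l.1 ∈ varsF F :=
  Finset.mem_biUnion.2 ⟨C, hC, Finset.mem_image.2 ⟨l, hl, rfl⟩⟩

lemma unsat_deriv : ∀ n (F : CFormula), (varsF F).card ≤ n → Unsat F → Deriv F emptyClause := by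
  intro n
  induction n with
  | zero =>
    intro F hcard hF
    have hv : varsF F = ∅ := Finset.card_eq_zero.1 (Nat.le_zero.1 hcard)
    have hne : ∃ C ∈ F, ¬SatClause (fun _ => true) C := by
      by_contra h
      push_neg at h
      exact hF ⟨fun _ => true, h⟩
    obtain ⟨C, hC, -⟩ := hne
    have : C = emptyClause := by
      apply Subtype.ext
      apply Finset.eq_empty_of_forall_notMem
      intro l hl
      have := clause_vars_sub hC hl
      rw [hv] at this
      exact absurd this (Finset.notMem_empty _)
    exact this ▸ Deriv.ax hC
  | succ n ih =>
    intro F hcard hF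
    rcases Finset.eq_empty_or_nonempty (varsF F) with hv | ⟨x, hx⟩
    · have hne : ∃ C ∈ F, ¬SatClause (fun _ => true) C := by
        by_contra h
        push_neg at h
        exact hF ⟨fun _ => true, h⟩
      obtain ⟨C, hC, -⟩ := hne
      have : C = emptyClause := by
        apply Subtype.ext
        apply Finset.eq_empty_of_forall_notMem
        intro l hl
        have := clause_vars_sub hC hl
        rw [hv] at this
        exact absurd this (Finset.notMem_empty _)
      exact this ▸ Deriv.ax hC
    · have hcard' : ∀ b : Bool, (varsF (restrict F x b)).card ≤ n := by
        intro b
        have h1 : (varsF (restrict F x b)).card ≤ ((varsF F).erase x).card :=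
          Finset.card_le_card (varsF_restrict b)
        have h2 : ((varsF F).erase x).card < (varsF F).card :=
          Finset.card_erase_lt_of_mem hx
        omega
      have hd1 := ih (restrict F x true) (hcard' true) (unsat_restrict hF x true)
      have hd2 := ih (restrict F x false) (hcard' false) (unsat_restrict hF x false)
      obtain ⟨D₁, hD₁, hsub1, hsup1⟩ := deriv_lift hd1
      obtain ⟨D₂, hD₂, hsub2, hsup2⟩ := deriv_lift hd2
      have hsup1' : D₁.1 ⊆ {((x, false) : Lit)} := by
        intro l hl
        rcases Finset.mem_insert.1 (hsup1 hl) with h' | h'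
        · simp only [Bool.not_true] at h'
          exact Finset.mem_singleton.2 h'
        · exact absurd h' (Finset.notMem_empty _)
      have hsup2' : D₂.1 ⊆ {((x, true) : Lit)} := by
        intro l hl
        rcases Finset.mem_insert.1 (hsup2 hl) with h' | h'
        · simp only [Bool.not_false] at h'
          exact Finset.mem_singleton.2 h'
        · exact absurd h' (Finset.notMem_empty _)
      -- D₁.1 ⊆ {(x, false)}, D₂.1 ⊆ {(x, true)}
      by_cases h1 : D₁.1 = ∅
      · exact (Subtype.ext h1 : D₁ = emptyClause) ▸ hD₁
      by_cases h2 : D₂.1 = ∅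
      · exact (Subtype.ext h2 : D₂ = emptyClause) ▸ hD₂
      have hxf : (x, false) ∈ D₁.1 := by
        obtain ⟨l, hl⟩ := Finset.nonempty_iff_ne_empty.2 h1
        have := Finset.mem_singleton.1 (hsup1' hl)
        rwa [← this]
      have hxt : (x, true) ∈ D₂.1 := by
        obtain ⟨l, hl⟩ := Finset.nonempty_iff_ne_empty.2 h2
        have := Finset.mem_singleton.1 (hsup2' hl)
        rwa [← this]
      refine Deriv.res hD₂ hD₁ ⟨x, hxt, hxf, ?_, ?_⟩
      · intro y hy
        rcases hy with ⟨h, -⟩ | ⟨h, -⟩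
        · exact congrArg Prod.fst (Finset.mem_singleton.1 (hsup2' h))
        · exact congrArg Prod.fst (Finset.mem_singleton.1 (hsup2' h))
      · show (∅ : Finset Lit) = _
        symm
        rw [Finset.union_eq_empty]
        constructor
        · apply Finset.eq_empty_of_forall_notMem
          intro l hl
          exact Finset.ne_of_mem_erase hl
            (Finset.mem_singleton.1 (hsup2' (Finset.mem_of_mem_erase hl)))
        · apply Finset.eq_empty_of_forall_notMem
          intro l hl
          exact Finset.ne_of_mem_erase hl
            (Finset.mem_singleton.1 (hsup1' (Finset.mem_of_mem_erase hl)))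

/-- The step condition of a resolution proof, as a standalone predicate. -/
def Good (F : CFormula) (Q : List Clause) : Prop :=
  ∀ i : Fin Q.length, Q.get i ∈ F ∨
    ∃ j k : Fin Q.length, j < i ∧ k < i ∧ IsResolvent (Q.get j) (Q.get k) (Q.get i)

lemma deriv_list {F : CFormula} {C : Clause} (h : Deriv F C) :
    ∃ Q : List Clause, ∃ hne : Q ≠ [], Q.getLast hne = C ∧ Good F Q := by
  induction h with
  | @ax C hC =>
    refine ⟨[C], by simp, rfl, ?_⟩
    rintro ⟨i, hi⟩
    left
    have hi0 : i = 0 := by simpa [Nat.lt_one_iff] using hi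
    subst hi0
    exact hC
  | @res A B C _ _ hres ihA ihB =>
    obtain ⟨QA, hneA, hlastA, hgoodA⟩ := ihA
    obtain ⟨QB, hneB, hlastB, hgoodB⟩ := ihB
    have hlenA : 0 < QA.length := List.length_pos_iff.2 hneA
    have hlenB : 0 < QB.length := List.length_pos_iff.2 hneB
    refine ⟨QA ++ QB ++ [C], by simp, by simp, ?_⟩
    intro i
    have hlen : (QA ++ QB ++ [C]).length = QA.length + QB.length + 1 := by
      rw [List.length_append, List.length_append, List.length_singleton]
    have hget : ∀ (j : ℕ) (hj : j < (QA ++ QB ++ [C]).length),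
        (QA ++ QB ++ [C]).get ⟨j, hj⟩ =
          if h : j < QA.length then QA.get ⟨j, h⟩
          else if h' : j - QA.length < QB.length then QB.get ⟨j - QA.length, h'⟩
          else C := by
      intro j hj
      split_ifs with h h'
      · rw [List.get_eq_getElem,
          List.getElem_append_left (show j < (QA ++ QB).length by simp; omega),
          List.getElem_append_left h]
        rfl
      · rw [List.get_eq_getElem,
          List.getElem_append_left (show j < (QA ++ QB).length by simp; omega),
          List.getElem_append_right (show QA.length ≤ j by omega)]
        rfl
      · have hj' : j = QA.length + QB.length := by rw [hlen] at hj; omega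
        rw [List.get_eq_getElem,
          List.getElem_append_right (show (QA ++ QB).length ≤ j by simp; omega)]
        have hj0 : j - (QA ++ QB).length = 0 := by simp; omega
        simp [hj0]
    by_cases hi : i.1 < QA.length
    · rcases hgoodA ⟨i.1, hi⟩ with hax | ⟨j, k, hj, hk, hres'⟩
      · left
        rw [hget i.1 i.2, dif_pos hi]
        exact hax
      · right
        have hjlen : j.1 < (QA ++ QB ++ [C]).length := by rw [hlen]; omega
        have hklen : k.1 < (QA ++ QB ++ [C]).length := by rw [hlen]; omega
        refine ⟨⟨j.1, hjlen⟩, ⟨k.1, hklen⟩, hj, hk, ?_⟩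
        rw [hget i.1 i.2, dif_pos hi, hget j.1 hjlen, dif_pos j.2, hget k.1 hklen, dif_pos k.2]
        exact hres'
    · by_cases hi' : i.1 - QA.length < QB.length
      · rcases hgoodB ⟨i.1 - QA.length, hi'⟩ with hax | ⟨j, k, hj, hk, hres'⟩
        · left
          rw [hget i.1 i.2, dif_neg hi, dif_pos hi']
          exact hax
        · right
          have hjv : j.1 < QB.length := j.2
          have hkv : k.1 < QB.length := k.2
          have hjlen : QA.length + j.1 < (QA ++ QB ++ [C]).length := by rw [hlen]; omega
          have hklen : QA.length + k.1 < (QA ++ QB ++ [C]).length := by rw [hlen]; omega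
          have hjlt : j.1 < i.1 - QA.length := hj
          have hklt : k.1 < i.1 - QA.length := hk
          refine ⟨⟨QA.length + j.1, hjlen⟩, ⟨QA.length + k.1, hklen⟩,
            by simp only [Fin.lt_def]; omega, by simp only [Fin.lt_def]; omega, ?_⟩
          rw [hget i.1 i.2, dif_neg hi, dif_pos hi',
            hget _ hjlen, dif_neg (by omega), dif_pos (by simpa using hjv),
            hget _ hklen, dif_neg (by omega), dif_pos (by simpa using hkv)]
          simp only [Nat.add_sub_cancel_left]
          exact hres'
      · -- i is the last position: the resolvent C
        right
        have hiv : i.1 = QA.length + QB.length := by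
          have h2 : (i : ℕ) < QA.length + QB.length + 1 := lt_of_lt_of_eq i.2 hlen
          omega
        have hjlen : QA.length - 1 < (QA ++ QB ++ [C]).length := by rw [hlen]; omega
        have hklen : QA.length + (QB.length - 1) < (QA ++ QB ++ [C]).length := by
          rw [hlen]; omega
        refine ⟨⟨QA.length - 1, hjlen⟩, ⟨QA.length + (QB.length - 1), hklen⟩,
          by simp only [Fin.lt_def]; omega, by simp only [Fin.lt_def]; omega, ?_⟩
        rw [hget i.1 i.2, dif_neg hi, dif_neg hi',
          hget _ hjlen, dif_pos (show QA.length - 1 < QA.length by omega),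
          hget _ hklen, dif_neg (by omega),
          dif_pos (show QA.length + (QB.length - 1) - QA.length < QB.length by omega)]
        have hgA : ∀ h, QA.get ⟨QA.length - 1, h⟩ = A := by
          intro h
          rw [← hlastA, List.getLast_eq_getElem]
          rfl
        have hgB : ∀ h, QB.get ⟨QA.length + (QB.length - 1) - QA.length, h⟩ = B := by
          intro h
          have hfin : (⟨QA.length + (QB.length - 1) - QA.length, h⟩ : Fin QB.length)
              = ⟨QB.length - 1, by omega⟩ :=
            Fin.ext (show QA.length + (QB.length - 1) - QA.length = QB.length - 1 by omega)
          rw [hfin, ← hlastB, List.getLast_eq_getElem]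
          rfl
        rw [hgA, hgB]
        exact hres

/-- Refutational completeness of resolution. -/
theorem resolution_complete (F : CFormula) :
    Unsat F ↔ ∃ Q : List Clause, IsResProof F Q := by
  constructor
  · intro hF
    have hd : Deriv F emptyClause := unsat_deriv (varsF F).card F le_rfl hF
    obtain ⟨Q, hne, hlast, hgood⟩ := deriv_list hd
    exact ⟨Q, hne, by rw [List.getLast?_eq_getLast hne, hlast], hgood⟩
  · rintro ⟨Q, hne, hlast, hstep⟩ ⟨m, hm⟩
    have key : ∀ n, ∀ i : Fin Q.length, i.1 < n → SatClause m (Q.get i) := by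
      intro n
      induction n with
      | zero => intro i h; omega
      | succ n ihn =>
        intro i hi
        rcases hstep i with h1 | ⟨j, k, hj, hk, hres⟩
        · exact hm _ h1
        · have hj' : j.1 < i.1 := hj
          have hk' : k.1 < i.1 := hk
          exact sat_resolvent hres (ihn j (by omega)) (ihn k (by omega))
    have hlen : 0 < Q.length := List.length_pos_iff.2 hne
    have hget : ∀ h, Q.get ⟨Q.length - 1, h⟩ = emptyClause := by
      intro h
      have h1 := List.getLast?_eq_getLast hne
      rw [h1] at hlast
      have h2 := Option.some_injective _ hlast
      rw [List.get_eq_getElem, ← List.getLast_eq_getElem, h2]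
      exact hne
    have := key Q.length ⟨Q.length - 1, by omega⟩ (by omega)
    rw [hget] at this
    obtain ⟨l, hl, -⟩ := this
    simp [emptyClause] at hl

end
end

section
/- Frontier sufficiency: if an UNSAT formula F has a resolution proof with K derived (non-axiom) entries, then Frontier(F) is UNSAT and has a resolution proof with at most K derived (non-axiom) entries. -/
open scoped Classical

noncomputable section

/-- Every clause of `F` contains a frontier clause. -/
lemma exists_frontier_subset_aux (F : CFormula) :
    ∀ n (C : Clause), C.1.card = n → C ∈ F → ∃ C' ∈ Frontier F, C'.1 ⊆ C.1 := by
  intro n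
  induction n using Nat.strong_induction_on with
  | _ n ih =>
    intro C hn hC
    by_cases h : ∃ C' ∈ F, C'.1 ⊂ C.1
    · obtain ⟨C', hC', hsub⟩ := h
      obtain ⟨C'', hmem, hs⟩ := ih C'.1.card (hn ▸ Finset.card_lt_card hsub) C' rfl hC'
      exact ⟨C'', hmem, hs.trans hsub.subset⟩
    · exact ⟨C, by simp only [Frontier, Finset.mem_filter]; exact ⟨hC, h⟩, subset_rfl⟩

lemma exists_frontier_subset (F : CFormula) (C : Clause) (hC : C ∈ F) :
    ∃ C' ∈ Frontier F, C'.1 ⊆ C.1 :=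
  exists_frontier_subset_aux F C.1.card C rfl hC

lemma filter_len_aux (p q : Clause → Bool) :
    ∀ (l l' : List Clause), l.length = l'.length →
    (∀ i, i < l.length → q (l'.getD i emptyClause) = true →
      p (l.getD i emptyClause) = true) →
    (l'.filter q).length ≤ (l.filter p).length := by
  intro l
  induction l with
  | nil =>
    intro l' h _
    have : l' = [] := List.eq_nil_of_length_eq_zero h.symm
    simp [this]
  | cons a l ih =>
    intro l' hlen hpt
    match l' with
    | [] => simp
    | b :: l' =>
      have h0 := hpt 0 (by simp) 
      have htail := ih l' (by simpa using hlen) (fun i hi hq => hpt (i+1) (by simpa using Nat.succ_lt_succ hi) hq)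
      simp only [List.getD_cons_zero] at h0
      by_cases hb : q b = true
      · rw [List.filter_cons_of_pos hb, List.filter_cons_of_pos (h0 hb)]
        simpa using htail
      · rw [List.filter_cons_of_neg hb]
        by_cases ha : p a = true
        · rw [List.filter_cons_of_pos ha]; exact htail.trans (by simp)
        · rw [List.filter_cons_of_neg ha]; exact htail

/-- The subsumption construction: replace each proof entry by a subsumed clause. -/
lemma build_sub (F : CFormula) (Q : List Clause)
    (hstep : ∀ i : Fin Q.length, Q.get i ∈ F ∨
      ∃ j k : Fin Q.length, j < i ∧ k < i ∧ IsResolvent (Q.get j) (Q.get k) (Q.get i)) :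
    ∀ n, n ≤ Q.length → ∃ Q' : List Clause, Q'.length = n ∧
      ∀ i, i < n →
        (Q'.getD i emptyClause).1 ⊆ (Q.getD i emptyClause).1 ∧
        (Q.getD i emptyClause ∈ F → Q'.getD i emptyClause ∈ Frontier F) ∧
        (Q'.getD i emptyClause ∈ Frontier F ∨ ∃ j k, j < i ∧ k < i ∧
          IsResolvent (Q'.getD j emptyClause) (Q'.getD k emptyClause)
            (Q'.getD i emptyClause)) := by
  intro n
  induction n with
  | zero => exact fun _ => ⟨[], rfl, fun i hi => absurd hi (Nat.not_lt_zero i)⟩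
  | succ n ih =>
    intro hn1
    have hn : n < Q.length := hn1
    obtain ⟨Q', hlen, hprop⟩ := ih (Nat.le_of_lt hn)
    have hgetn : Q.getD n emptyClause = Q.get ⟨n, hn⟩ := List.getD_eq_get Q _ ⟨n, hn⟩
    -- choose the new clause c with its three properties
    have hc : ∃ c : Clause,
        c.1 ⊆ (Q.getD n emptyClause).1 ∧
        (Q.getD n emptyClause ∈ F → c ∈ Frontier F) ∧
        (c ∈ Frontier F ∨ ∃ j k, j < n ∧ k < n ∧
          IsResolvent (Q'.getD j emptyClause) (Q'.getD k emptyClause) c) := by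
      by_cases hmem : Q.getD n emptyClause ∈ F
      · obtain ⟨c, hcF, hcs⟩ := exists_frontier_subset F _ hmem
        exact ⟨c, hcs, fun _ => hcF, Or.inl hcF⟩
      · rcases hstep ⟨n, hn⟩ with hax | ⟨j, k, hj, hk, x, hxA, hxB, huniq, hR⟩
        · exact absurd (hgetn ▸ hax) hmem
        · have hjn : (j : ℕ) < n := hj
          have hkn : (k : ℕ) < n := hk
          obtain ⟨hAjS, -, hAjJ⟩ := hprop j hjn
          obtain ⟨hAkS, -, hAkJ⟩ := hprop k hkn
          rw [List.getD_eq_get Q _ ⟨j, j.isLt⟩, Fin.eta] at hAjS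
          rw [List.getD_eq_get Q _ ⟨k, k.isLt⟩, Fin.eta] at hAkS
          set Aj := Q'.getD j emptyClause with hAj
          set Ak := Q'.getD k emptyClause with hAk
          by_cases hxj : (x, true) ∈ Aj.1
          · by_cases hxk : (x, false) ∈ Ak.1
            · -- genuine resolvent
              have hsubR : Aj.1.erase (x, true) ∪ Ak.1.erase (x, false) ⊆
                  (Q.get ⟨n, hn⟩).1 := by
                rw [hR]
                exact Finset.union_subset_union (Finset.erase_subset_erase _ hAjS)
                  (Finset.erase_subset_erase _ hAkS)
              refine ⟨⟨Aj.1.erase (x, true) ∪ Ak.1.erase (x, false),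
                  fun v hv => (Q.get ⟨n, hn⟩).2 v ⟨hsubR hv.1, hsubR hv.2⟩⟩,
                  by rw [hgetn]; exact hsubR, fun h => absurd h hmem,
                  Or.inr ⟨j, k, hjn, hkn, x, hxj, hxk, ?_, rfl⟩⟩
              intro y hy
              exact huniq y (hy.imp (fun h => ⟨hAjS h.1, hAkS h.2⟩)
                (fun h => ⟨hAjS h.1, hAkS h.2⟩))
            · -- Ak survives
              refine ⟨Ak, ?_, fun h => absurd h hmem, ?_⟩
              · intro a ha
                rw [hgetn, hR]
                refine Finset.mem_union_right _ (Finset.mem_erase.2 ⟨?_, hAkS ha⟩)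
                rintro rfl; exact hxk ha
              · rcases hAkJ with h | ⟨j', k', hj', hk', hres⟩
                · exact Or.inl h
                · exact Or.inr ⟨j', k', hj'.trans hkn, hk'.trans hkn, hres⟩
          · -- Aj survives
            refine ⟨Aj, ?_, fun h => absurd h hmem, ?_⟩
            · intro a ha
              rw [hgetn, hR]
              refine Finset.mem_union_left _ (Finset.mem_erase.2 ⟨?_, hAjS ha⟩)
              rintro rfl; exact hxj ha
            · rcases hAjJ with h | ⟨j', k', hj', hk', hres⟩
              · exact Or.inl h
              · exact Or.inr ⟨j', k', hj'.trans hjn, hk'.trans hjn, hres⟩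
    obtain ⟨c, hc1, hc2, hc3⟩ := hc
    refine ⟨Q' ++ [c], by simp [hlen], ?_⟩
    have hgd : ∀ i, i < n → (Q' ++ [c]).getD i emptyClause = Q'.getD i emptyClause := by
      intro i hi
      rw [List.getD_eq_getElem?_getD, List.getD_eq_getElem?_getD,
        List.getElem?_append_left (by omega : i < Q'.length)]
    have hgdn : (Q' ++ [c]).getD n emptyClause = c := by
      rw [List.getD_eq_getElem?_getD, List.getElem?_append_right (by omega)]
      simp [hlen]
    intro i hi
    rcases Nat.lt_succ_iff_lt_or_eq.1 hi with hi' | rfl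
    · obtain ⟨h1, h2, h3⟩ := hprop i hi'
      refine ⟨by rwa [hgd i hi'], by rwa [hgd i hi'], ?_⟩
      rcases h3 with h | ⟨j, k, hj, hk, hres⟩
      · exact Or.inl (by rwa [hgd i hi'])
      · exact Or.inr ⟨j, k, hj, hk, by
          rwa [hgd j (hj.trans hi'), hgd k (hk.trans hi'), hgd i hi']⟩
    · refine ⟨by rwa [hgdn], by rwa [hgdn], ?_⟩
      rcases hc3 with h | ⟨j, k, hj, hk, hres⟩
      · exact Or.inl (by rwa [hgdn])
      · exact Or.inr ⟨j, k, hj, hk, by rwa [hgd j hj, hgd k hk, hgdn]⟩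

/-- Frontier sufficiency. -/
theorem frontier_sufficiency (F : CFormula) (hF : Unsat F) (K : ℕ)
    (Q : List Clause) (hQ : IsResProof F Q)
    (hK : (Q.filter fun C => C ∉ F).length = K) :
    Unsat (Frontier F) ∧ ∃ Q' : List Clause, IsResProof (Frontier F) Q' ∧
      (Q'.filter fun C => C ∉ Frontier F).length ≤ K := by
  classical
  obtain ⟨hne, hlast, hstep⟩ := hQ
  -- Unsat (Frontier F)
  have hunsat : Unsat (Frontier F) := by
    rintro ⟨m, hm⟩
    refine hF ⟨m, fun C hC => ?_⟩
    obtain ⟨C', hC'F, hsub⟩ := exists_frontier_subset F C hC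
    obtain ⟨l, hl, hv⟩ := hm C' hC'F
    exact ⟨l, hsub hl, hv⟩
  obtain ⟨Q', hlen, hprop⟩ := build_sub F Q hstep Q.length le_rfl
  have hQne : 0 < Q.length := List.length_pos_iff.2 hne
  have hQ'ne : Q' ≠ [] := by
    intro h; rw [h] at hlen; exact absurd hlen.symm (Nat.pos_iff_ne_zero.1 hQne)
  -- last entry of Q is emptyClause as getD
  have hlastD : Q.getD (Q.length - 1) emptyClause = emptyClause := by
    rw [List.getLast?_eq_getElem?] at hlast
    rw [List.getD_eq_getElem?_getD, hlast]
    rfl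
  refine ⟨hunsat, Q', ⟨hQ'ne, ?_, ?_⟩, ?_⟩
  · -- last entry of Q'
    rw [List.getLast?_eq_getElem?,
      List.getElem?_eq_getElem (by omega : Q'.length - 1 < Q'.length)]
    congr 1
    have h1 : Q'.length - 1 < Q.length := by omega
    obtain ⟨hsub, -, -⟩ := hprop (Q'.length - 1) (by omega)
    rw [hlen, hlastD] at hsub
    rw [← List.getD_eq_getElem Q' emptyClause (by omega : Q'.length - 1 < Q'.length), hlen]
    exact Subtype.ext (Finset.subset_empty.1 hsub)
  · -- entries
    intro i
    have hiQ : (i : ℕ) < Q.length := by rw [← hlen]; exact i.isLt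
    obtain ⟨-, -, h3⟩ := hprop i hiQ
    rw [List.getD_eq_get Q' _ ⟨i, i.isLt⟩, Fin.eta] at h3
    rcases h3 with h | ⟨j, k, hj, hk, hres⟩
    · exact Or.inl h
    · refine Or.inr ⟨⟨j, hj.trans i.isLt⟩, ⟨k, hk.trans i.isLt⟩, hj, hk, ?_⟩
      rwa [List.getD_eq_get Q' _ ⟨j, (show j < Q'.length from hj.trans i.isLt)⟩,
        List.getD_eq_get Q' _ ⟨k, (show k < Q'.length from hk.trans i.isLt)⟩] at hres
  · -- count
    rw [← hK]
    apply filter_len_aux _ _ Q Q' hlen.symm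
    intro i hi hq
    obtain ⟨-, h2, -⟩ := hprop i hi
    simp only [decide_eq_true_eq] at hq ⊢
    intro hmem
    exact hq (h2 hmem)


end
end

section
/- Frontier mirroring construction: let F be an UNSAT formula with a resolution proof whose non-axiom entries, in order, are Q₁, …, Q_K. Then there exists a resolution proof of Frontier(F) consisting of the clauses of Frontier(F) (listed as axioms) followed by entries Q′₁, …, Q′_K such that Q′_j ⊆ Q_j for every 1 ≤ j ≤ K; in particular Q′_K = ⊥. -/
open scoped Classical

noncomputable section

lemma frontier_cover (F : CFormula) : ∀ C : Clause, C ∈ F → ∃ C' ∈ Frontier F, C'.1 ⊆ C.1 := by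
  have H : ∀ n (C : Clause), C.1.card ≤ n → C ∈ F → ∃ C' ∈ Frontier F, C'.1 ⊆ C.1 := by
    intro n
    induction n with
    | zero =>
      intro C hc hC
      have hC0 : C.1 = ∅ := Finset.card_eq_zero.mp (Nat.le_zero.mp hc)
      refine ⟨C, Finset.mem_filter.mpr ⟨hC, ?_⟩, subset_rfl⟩
      rintro ⟨ω', _, hss⟩
      rw [hC0] at hss
      exact Finset.not_ssubset_empty _ hss
    | succ n ih =>
      intro C hc hC
      by_cases h : ∃ ω' ∈ F, ω'.1 ⊂ C.1
      · obtain ⟨ω', hω', hss⟩ := h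
        have hcard : ω'.1.card ≤ n := by
          have := Finset.card_lt_card hss
          omega
        obtain ⟨C', hC', hsub⟩ := ih ω' hcard hω'
        exact ⟨C', hC', hsub.trans hss.subset⟩
      · exact ⟨C, Finset.mem_filter.mpr ⟨hC, h⟩, subset_rfl⟩
  exact fun C hC => H C.1.card C le_rfl hC

lemma resolvent_mono {A B R A' B' : Clause} (hR : IsResolvent A B R)
    (hA : A'.1 ⊆ A.1) (hB : B'.1 ⊆ B.1) :
    ∃ R' : Clause, R'.1 ⊆ R.1 ∧ (R' = A' ∨ R' = B' ∨ IsResolvent A' B' R') := by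
  obtain ⟨x, hxA, hxB, hside, hRdef⟩ := hR
  by_cases hA' : (x, true) ∈ A'.1
  · by_cases hB' : (x, false) ∈ B'.1
    · refine ⟨⟨(A'.1.erase (x, true)) ∪ (B'.1.erase (x, false)), ?_⟩, ?_, Or.inr (Or.inr ?_)⟩
      · intro v ⟨h1, h2⟩
        simp only [Finset.mem_union, Finset.mem_erase] at h1 h2
        rcases h1 with ⟨hne1, h1⟩ | ⟨hne1, h1⟩ <;> rcases h2 with ⟨hne2, h2⟩ | ⟨hne2, h2⟩
        · exact A'.2 v ⟨h1, h2⟩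
        · have : v = x := hside v (Or.inl ⟨hA h1, hB h2⟩)
          subst this; exact hne1 rfl
        · have : v = x := hside v (Or.inr ⟨hA h2, hB h1⟩)
          subst this; exact A'.2 v ⟨hA', h2⟩
        · exact B'.2 v ⟨h1, h2⟩
      · intro l hl
        rw [hRdef]
        simp only [Finset.mem_union, Finset.mem_erase] at hl ⊢
        rcases hl with ⟨hne, hl⟩ | ⟨hne, hl⟩
        · exact Or.inl ⟨hne, hA hl⟩
        · exact Or.inr ⟨hne, hB hl⟩
      · exact ⟨x, hA', hB', fun y hy => hside y (by tauto), rfl⟩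
    · refine ⟨B', ?_, Or.inr (Or.inl rfl)⟩
      intro l hl
      rw [hRdef]
      refine Finset.mem_union_right _ (Finset.mem_erase.mpr ⟨?_, hB hl⟩)
      rintro rfl; exact hB' hl
  · refine ⟨A', ?_, Or.inl rfl⟩
    intro l hl
    rw [hRdef]
    refine Finset.mem_union_left _ (Finset.mem_erase.mpr ⟨?_, hA hl⟩)
    rintro rfl; exact hA' hl

lemma empty_mem_frontier {F : CFormula} (h : emptyClause ∈ F) : emptyClause ∈ Frontier F := by
  refine Finset.mem_filter.mpr ⟨h, ?_⟩
  rintro ⟨ω', _, hss⟩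
  have : ω'.1 ⊂ (∅ : Finset Lit) := hss
  exact Finset.not_ssubset_empty _ this

lemma clause_eq_empty {C : Clause} (h : C.1 ⊆ (∅ : Finset Lit)) : C = emptyClause := by
  apply Subtype.ext
  simpa [emptyClause, Finset.subset_empty] using h

lemma mirror_exists (F : CFormula) (Q : List Clause)
    (hQ3 : ∀ i : Fin Q.length, Q.get i ∈ F ∨
      ∃ j k : Fin Q.length, j < i ∧ k < i ∧ IsResolvent (Q.get j) (Q.get k) (Q.get i)) :
    ∃ R : Fin Q.length → Clause, ∀ i : Fin Q.length,
      (R i).1 ⊆ (Q.get i).1 ∧ (Q.get i ∈ F → R i ∈ Frontier F) ∧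
      (R i ∈ Frontier F ∨
        ∃ j k : Fin Q.length, j < i ∧ k < i ∧ IsResolvent (R j) (R k) (R i)) := by
  have key : ∀ n, ∃ R : Fin Q.length → Clause, ∀ i : Fin Q.length, (i : ℕ) < n →
      (R i).1 ⊆ (Q.get i).1 ∧ (Q.get i ∈ F → R i ∈ Frontier F) ∧
      (R i ∈ Frontier F ∨
        ∃ j k : Fin Q.length, j < i ∧ k < i ∧ IsResolvent (R j) (R k) (R i)) := by
    intro n
    induction n with
    | zero => exact ⟨fun _ => emptyClause, fun i hi => absurd hi (by omega)⟩
    | succ n ih =>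
      obtain ⟨R, hR⟩ := ih
      by_cases hn : n < Q.length
      · set i0 : Fin Q.length := ⟨n, hn⟩ with hi0
        obtain ⟨C, hCsub, hCax, hCjust⟩ :
            ∃ C : Clause, C.1 ⊆ (Q.get i0).1 ∧ (Q.get i0 ∈ F → C ∈ Frontier F) ∧
              (C ∈ Frontier F ∨
                ∃ j k : Fin Q.length, j < i0 ∧ k < i0 ∧ IsResolvent (R j) (R k) C) := by
          by_cases hax : Q.get i0 ∈ F
          · obtain ⟨C, hCF, hCs⟩ := frontier_cover F _ hax
            exact ⟨C, hCs, fun _ => hCF, Or.inl hCF⟩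
          · rcases hQ3 i0 with h | ⟨j, k, hj, hk, hres⟩
            · exact absurd h hax
            · have hjn : (j : ℕ) < n := hj
              have hkn : (k : ℕ) < n := hk
              obtain ⟨hsubj, -, hjustj⟩ := hR j hjn
              obtain ⟨hsubk, -, hjustk⟩ := hR k hkn
              obtain ⟨C, hCs, hC3⟩ := resolvent_mono hres hsubj hsubk
              refine ⟨C, hCs, fun h => absurd h hax, ?_⟩
              rcases hC3 with rfl | rfl | hres'
              · rcases hjustj with h | ⟨a, b, ha, hb, hr⟩
                · exact Or.inl h
                · exact Or.inr ⟨a, b, ha.trans hj, hb.trans hj, hr⟩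
              · rcases hjustk with h | ⟨a, b, ha, hb, hr⟩
                · exact Or.inl h
                · exact Or.inr ⟨a, b, ha.trans hk, hb.trans hk, hr⟩
              · exact Or.inr ⟨j, k, hj, hk, hres'⟩
        refine ⟨Function.update R i0 C, ?_⟩
        intro i hi
        have upd : ∀ j : Fin Q.length, (j : ℕ) < n → Function.update R i0 C j = R j := by
          intro j hj
          exact Function.update_of_ne (Fin.ne_of_val_ne (by simp [hi0]; omega)) _ _
        by_cases hin : (i : ℕ) < n
        · obtain ⟨h1, h2, h3⟩ := hR i hin
          rw [upd i hin]
          refine ⟨h1, h2, ?_⟩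
          rcases h3 with h | ⟨j, k, hj, hk, hr⟩
          · exact Or.inl h
          · refine Or.inr ⟨j, k, hj, hk, ?_⟩
            rw [upd j (lt_trans hj hin), upd k (lt_trans hk hin)]
            exact hr
        · have hii : i = i0 := Fin.ext (by simp [hi0]; omega)
          subst hii
          rw [Function.update_self]
          refine ⟨hCsub, hCax, ?_⟩
          rcases hCjust with h | ⟨j, k, hj, hk, hr⟩
          · exact Or.inl h
          · refine Or.inr ⟨j, k, hj, hk, ?_⟩
            rw [upd j hj, upd k hk]
            exact hr
      · refine ⟨R, fun i hi => hR i ?_⟩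
        have := i.2; omega
  obtain ⟨R, hR⟩ := key Q.length
  exact ⟨R, fun i => hR i i.2⟩

/-- Frontier mirroring construction. -/
theorem frontier_mirroring (F : CFormula) (hF : Unsat F)
    (Q D : List Clause) (hQ : IsResProof F Q)
    (hD : D = Q.filter fun C => C ∉ F) :
    ∃ axs Q' : List Clause, axs.Nodup ∧ axs.toFinset = Frontier F ∧
      Q'.length = D.length ∧
      (∀ i (hi : i < Q'.length) (hi' : i < D.length),
        (Q'.get ⟨i, hi⟩).1 ⊆ (D.get ⟨i, hi'⟩).1) ∧
      IsResProof (Frontier F) (axs ++ Q') ∧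
      (Q' ≠ [] → Q'.getLast? = some emptyClause) := by
  obtain ⟨hQne, hQlast, hQstep⟩ := hQ
  by_cases hbot : emptyClause ∈ F
  · -- degenerate case: the empty clause is itself an axiom
    have hbotF : emptyClause ∈ Frontier F := empty_mem_frontier hbot
    refine ⟨((Frontier F).erase emptyClause).toList ++ [emptyClause],
      D.map (fun _ => emptyClause), ?_, ?_, ?_, ?_, ?_, ?_⟩
    · refine (Finset.nodup_toList _).append (List.nodup_singleton _) ?_
      intro a ha hb
      simp only [List.mem_singleton] at hb
      subst hb
      rw [Finset.mem_toList] at ha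
      exact (Finset.notMem_erase _ _) ha
    · rw [List.toFinset_append, Finset.toList_toFinset]
      simp only [List.toFinset_cons, List.toFinset_nil, LawfulSingleton.insert_empty_eq]
      rw [Finset.union_comm, ← Finset.insert_eq, Finset.insert_erase hbotF]
    · simp
    · intro i hi hi'
      simp only [List.get_eq_getElem, List.getElem_map]
      simp [emptyClause]
    · refine ⟨by simp, ?_, ?_⟩
      · rw [List.getLast?_append, List.getLast?_map]
        rcases eq_or_ne D [] with rfl | hDne
        · simp
        · rw [List.getLast?_eq_getLast hDne]
          simp
      · intro i
        left
        have hmem := List.get_mem (((Frontier F).erase emptyClause).toList ++ [emptyClause] ++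
            D.map (fun _ => emptyClause)) i
        rcases List.mem_append.mp hmem with h | h
        · rcases List.mem_append.mp h with h | h
          · rw [Finset.mem_toList] at h
            exact Finset.mem_of_mem_erase h
          · simp only [List.mem_singleton] at h
            rw [h]; exact hbotF
        · rcases List.mem_map.mp h with ⟨_, _, h⟩
          rw [← h]; exact hbotF
    · intro hne
      rw [List.getLast?_map]
      have hDne : D ≠ [] := by
        intro h; rw [h] at hne; simp at hne
      rw [List.getLast?_eq_getLast hDne]
      simp
  · -- main case: the empty clause is derived
    obtain ⟨R, hR⟩ := mirror_exists F Q hQstep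
    set p : Clause → Bool := fun C => decide (C ∉ F) with hp
    set idxs : List (Fin Q.length) := (List.finRange Q.length).filter (fun i => p (Q.get i))
      with hidxs
    have hDeq : D = idxs.map Q.get := by
      rw [hD]
      conv_lhs => rw [← List.map_get_finRange Q]
      rw [List.filter_map]
      rfl
    subst hDeq
    clear hD
    have hpair : idxs.Pairwise (· < ·) :=
      (List.pairwise_lt_finRange Q.length).filter _
    have hQpos : 0 < Q.length := List.length_pos_iff.mpr hQne
    set lfin : Fin Q.length := ⟨Q.length - 1, by omega⟩ with hlfin
    have hQl : Q.get lfin = emptyClause := by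
      rw [List.getLast?_eq_getLast hQne, List.getLast_eq_getElem hQne] at hQlast
      exact Option.some_injective _ hQlast
    have hlmem : lfin ∈ idxs := by
      rw [hidxs, List.mem_filter]
      refine ⟨List.mem_finRange _, ?_⟩
      show p (Q.get lfin) = true
      rw [hQl]
      simp [hp, hbot]
    have hidne : idxs ≠ [] := fun h => by simp [h] at hlmem
    have hLpos : 0 < idxs.length := List.length_pos_iff.mpr hidne
    have hidlast : idxs.getLast hidne = lfin := by
      obtain ⟨m, hm⟩ := List.mem_iff_get.mp hlmem
      have hlg : idxs.getLast hidne = idxs.get ⟨idxs.length - 1, by omega⟩ :=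
        List.getLast_eq_getElem _
      by_cases h : (m : ℕ) = idxs.length - 1
      · rw [hlg, ← hm]
        congr 1
        exact Fin.ext h.symm
      · exfalso
        have hm2 := m.2
        have hmlt : m < (⟨idxs.length - 1, by omega⟩ : Fin idxs.length) :=
          Fin.mk_lt_mk.mpr (by omega)
        have hcmp := List.pairwise_iff_get.mp hpair m ⟨idxs.length - 1, by omega⟩ hmlt
        have h1 := Fin.lt_def.mp hcmp
        have hmv : ((idxs.get m : Fin Q.length) : ℕ) = Q.length - 1 := by
          rw [hm]
        have h2 := (idxs.get ⟨idxs.length - 1, by omega⟩).2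
        omega
    have hRl : R lfin = emptyClause := by
      apply clause_eq_empty
      have := (hR lfin).1
      rw [hQl] at this
      exact this
    have hQ'last : (idxs.map (fun i => R i)).getLast? = some emptyClause := by
      rw [List.getLast?_map, List.getLast?_eq_getLast hidne, hidlast]
      simp [hRl]
    set axs := (Frontier F).toList with haxs
    clear_value axs
    have haxnd : axs.Nodup := by rw [haxs]; exact Finset.nodup_toList _
    have haxfs : axs.toFinset = Frontier F := by rw [haxs]; exact Finset.toList_toFinset _
    refine ⟨axs, idxs.map (fun i => R i), haxnd, haxfs,
      by simp, ?_, ⟨?_, ?_, ?_⟩, fun _ => hQ'last⟩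
    · intro i hi hi'
      simp only [List.get_eq_getElem, List.getElem_map]
      exact (hR _).1
    · simp [hidne]
    · rw [List.getLast?_append, hQ'last]
      rfl
    · intro i
      have hi2 := i.2
      simp only [List.length_append, List.length_map] at hi2
      by_cases hax : (i : ℕ) < axs.length
      · left
        have hg : (axs ++ idxs.map (fun i => R i)).get i = axs.get ⟨i.1, hax⟩ := by
          simp only [List.get_eq_getElem]
          exact List.getElem_append_left hax
        rw [hg, ← haxfs]
        exact List.mem_toFinset.mpr (List.get_mem _ _)
      · have hNle : axs.length ≤ (i : ℕ) := le_of_not_gt hax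
        have him : i.1 - axs.length < idxs.length := by omega
        set ii : Fin Q.length := idxs.get ⟨i.1 - axs.length, him⟩ with hii
        have hgeti : (axs ++ idxs.map (fun i => R i)).get i = R ii := by
          simp only [List.get_eq_getElem]
          rw [List.getElem_append_right (le_of_not_gt hax)]
          simp only [List.getElem_map]
          rfl
        obtain ⟨-, -, hjust⟩ := hR ii
        rcases hjust with h | ⟨j, k, hj, hk, hres⟩
        · left; rw [hgeti]; exact h
        · right
          have loc : ∀ j : Fin Q.length, j < ii →
              ∃ t : Fin ((axs ++ idxs.map (fun i => R i)).length),
                (t : ℕ) < i.1 ∧ (axs ++ idxs.map (fun i => R i)).get t = R j := by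
            intro j hjlt
            by_cases hjax : R j ∈ Frontier F
            · have hmem : R j ∈ axs := by rw [haxs]; exact Finset.mem_toList.mpr hjax
              obtain ⟨t, ht⟩ := List.mem_iff_get.mp hmem
              have ht2 : (t : ℕ) < axs.length := t.2
              refine ⟨⟨t.1, by simp only [List.length_append, List.length_map]; omega⟩,
                by show (t : ℕ) < (i : ℕ); omega, ?_⟩
              simp only [List.get_eq_getElem]
              rw [List.getElem_append_left ht2]
              exact ht
            · have hjF : Q.get j ∉ F := fun h => hjax ((hR j).2.1 h)
              have hjmem : j ∈ idxs := by
                rw [hidxs, List.mem_filter]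
                refine ⟨List.mem_finRange _, ?_⟩
                show p (Q.get j) = true
                rw [hp]
                simp only [decide_eq_true_eq]
                exact hjF
              obtain ⟨m', hm'⟩ := List.mem_iff_get.mp hjmem
              have hm'lt : (m' : ℕ) < i.1 - axs.length := by
                by_contra hcon
                push_neg at hcon
                rcases eq_or_lt_of_le hcon with heq | hlt
                · have : idxs.get m' = ii := by
                    rw [hii]; congr 1; exact Fin.ext heq.symm
                  rw [hm'] at this
                  rw [this] at hjlt
                  exact lt_irrefl _ hjlt
                · have hcmp := List.pairwise_iff_get.mp hpair ⟨i.1 - axs.length, him⟩ m'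
                    (Fin.mk_lt_mk.mpr hlt)
                  rw [hm'] at hcmp
                  exact absurd hjlt (asymm hcmp)
              have hm'2 := m'.2
              refine ⟨⟨axs.length + m'.1,
                  by simp only [List.length_append, List.length_map]; omega⟩,
                by show axs.length + (m' : ℕ) < (i : ℕ); omega, ?_⟩
              simp only [List.get_eq_getElem]
              rw [List.getElem_append_right (by omega : axs.length ≤ axs.length + m'.1)]
              simp only [List.getElem_map]
              have : (axs.length + m'.1 - axs.length) = m'.1 := by omega
              simp only [this]
              rw [show idxs[m'.1] = idxs.get m' from rfl, hm']
          obtain ⟨tj, htj, htjv⟩ := loc j hj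
          obtain ⟨tk, htk, htkv⟩ := loc k hk
          refine ⟨tj, tk, Fin.lt_def.mpr htj, Fin.lt_def.mpr htk, ?_⟩
          rw [htjv, htkv, hgeti]
          exact hres

end
end

section
/- Remaining-length lower bound: let P be a subproblem for an UNSAT formula F. Then every compatible proof of P contains at least min{#S − 1 : S ⊆ Frontier(Known(P)), S is UNSAT} clauses that do not belong to Known(P). -/
open scoped Classical

noncomputable section

/-! ### Auxiliary lemmas -/

lemma satClause_of_subset {m : Model} {C C' : Clause} (h : C'.1 ⊆ C.1)
    (hs : SatClause m C') : SatClause m C := by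
  obtain ⟨l, hl, hml⟩ := hs
  exact ⟨l, h hl, hml⟩

lemma not_satClause_empty (m : Model) : ¬ SatClause m emptyClause := by
  rintro ⟨l, hl, -⟩
  simp [emptyClause] at hl

lemma unsat_singleton_empty : Unsat ({emptyClause} : CFormula) := by
  rintro ⟨m, hm⟩
  exact not_satClause_empty m (hm _ (Finset.mem_singleton_self _))

lemma resolvent_sound {A B R : Clause} {m : Model} (h : IsResolvent A B R)
    (hA : SatClause m A) (hB : SatClause m B) : SatClause m R := by
  obtain ⟨x, hxA, hxB, -, hR⟩ := h
  obtain ⟨l, hl, hml⟩ := hA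
  by_cases hlx : l = (x, true)
  · obtain ⟨l', hl', hml'⟩ := hB
    by_cases hl'x : l' = (x, false)
    · exfalso
      subst hlx; subst hl'x
      simp only at hml hml'
      rw [hml] at hml'
      exact Bool.true_eq_false ▸ hml'
    · refine ⟨l', ?_, hml'⟩
      rw [hR]
      exact Finset.mem_union_right _ (Finset.mem_erase.2 ⟨hl'x, hl'⟩)
  · refine ⟨l, ?_, hml⟩
    rw [hR]
    exact Finset.mem_union_left _ (Finset.mem_erase.2 ⟨hlx, hl⟩)

lemma frontier_min (G : CFormula) :
    ∀ n : ℕ, ∀ ω : Clause, ω.1.card ≤ n → ω ∈ G →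
      ∃ ω' ∈ Frontier G, ω'.1 ⊆ ω.1 := by
  intro n
  induction n with
  | zero =>
    intro ω hcard hω
    refine ⟨ω, Finset.mem_filter.2 ⟨hω, ?_⟩, subset_rfl⟩
    rintro ⟨ω', -, hss⟩
    have := Finset.card_lt_card hss
    omega
  | succ n ih =>
    intro ω hcard hω
    by_cases h : ∃ ω'' ∈ G, ω''.1 ⊂ ω.1
    · obtain ⟨ω'', hω''G, hss⟩ := h
      have hlt := Finset.card_lt_card hss
      obtain ⟨ω', hω', hsub⟩ := ih ω'' (by omega) hω''G
      exact ⟨ω', hω', hsub.trans hss.subset⟩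
    · exact ⟨ω, Finset.mem_filter.2 ⟨hω, h⟩, subset_rfl⟩

lemma frontier_shrink (G : CFormula) (S : CFormula) (hSG : S ⊆ G) (hS : Unsat S) :
    ∃ S'' : CFormula, S'' ⊆ Frontier G ∧ Unsat S'' ∧ S''.card ≤ S.card := by
  have hch : ∀ ω : Clause, ω ∈ G → ∃ ω' ∈ Frontier G, ω'.1 ⊆ ω.1 := fun ω hω =>
    frontier_min G ω.1.card ω le_rfl hω
  classical
  set f : Clause → Clause := fun ω =>
    if h : ω ∈ G then (hch ω h).choose else ω with hf
  refine ⟨S.image f, ?_, ?_, Finset.card_image_le⟩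
  · intro x hx
    obtain ⟨ω, hω, rfl⟩ := Finset.mem_image.1 hx
    have h : ω ∈ G := hSG hω
    simp only [hf, dif_pos h]
    exact (hch ω h).choose_spec.1
  · rintro ⟨m, hm⟩
    apply hS
    refine ⟨m, fun ω hω => ?_⟩
    have h : ω ∈ G := hSG hω
    have hfm := hm (f ω) (Finset.mem_image_of_mem f hω)
    have hsub : (f ω).1 ⊆ ω.1 := by
      simp only [hf, dif_pos h]
      exact (hch ω h).choose_spec.2
    exact satClause_of_subset hsub hfm

lemma mem_layersUpTo {L : List CFormula} {n : ℕ} {ω : Clause} :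
    ω ∈ layersUpTo L n ↔ ∃ j, j < n ∧ ω ∈ L.getD j ∅ := by
  simp [layersUpTo]

/-- The least index `j ≥ 1` of a layer containing `ω`. -/
def lay (L : List CFormula) (ω : Clause) : ℕ :=
  sInf {j | 1 ≤ j ∧ j < L.length ∧ ω ∈ L.getD j ∅}

lemma lay_spec {L : List CFormula} {ω : Clause}
    (h : ∃ j, 1 ≤ j ∧ j < L.length ∧ ω ∈ L.getD j ∅) :
    1 ≤ lay L ω ∧ lay L ω < L.length ∧ ω ∈ L.getD (lay L ω) ∅ :=
  Nat.sInf_mem h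

lemma lay_le {L : List CFormula} {ω : Clause} {j : ℕ}
    (h1 : 1 ≤ j) (h2 : j < L.length) (h3 : ω ∈ L.getD j ∅) : lay L ω ≤ j :=
  Nat.sInf_le ⟨h1, h2, h3⟩

lemma lay_exists {L : List CFormula} {G : CFormula} {ω : Clause}
    (hF0 : L.getD 0 ∅ ⊆ G) (hU : ω ∈ layersUpTo L L.length) (hG : ω ∉ G) :
    ∃ j, 1 ≤ j ∧ j < L.length ∧ ω ∈ L.getD j ∅ := by
  obtain ⟨j, hj, hmem⟩ := mem_layersUpTo.1 hU
  refine ⟨j, ?_, hj, hmem⟩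
  rcases Nat.eq_zero_or_pos j with rfl | h
  · exact absurd (hF0 hmem) hG
  · exact h

lemma main_rec (G : CFormula) (L : List CFormula) (hF0 : L.getD 0 ∅ ⊆ G)
    (hcons : ∀ j, 1 ≤ j → j < L.length → ∀ ω ∈ L.getD j ∅,
      ∃ ω' ∈ L.getD (j - 1) ∅, ∃ ω'' ∈ layersUpTo L j, IsResolvent ω' ω'' ω) :
    ∀ n : ℕ, ∀ S Pr : CFormula,
      ((layersUpTo L L.length \ G) \ Pr).card ≤ n →
      S \ G ⊆ layersUpTo L L.length \ G →
      Pr ⊆ layersUpTo L L.length \ G →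
      (∀ x ∈ S \ G, x ∉ Pr) →
      (∀ ρ ∈ Pr, ∀ ω ∈ S \ G, lay L ω ≤ lay L ρ) →
      Unsat S → S.card ≤ Pr.card + 1 →
      ∃ S', S' ⊆ G ∧ Unsat S' ∧ S'.card ≤ (layersUpTo L L.length \ G).card + 1 := by
  set T := layersUpTo L L.length \ G with hTdef
  intro n
  induction n with
  | zero =>
    intro S Pr hmeas hST hPrT hdisj hord hU hcard
    by_cases hSG : S \ G = ∅
    · refine ⟨S, Finset.sdiff_eq_empty_iff_subset.1 hSG, hU, ?_⟩
      have := Finset.card_le_card hPrT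
      omega
    · exfalso
      obtain ⟨ω₀, hω₀⟩ := Finset.nonempty_iff_ne_empty.2 hSG
      have h1 : ω₀ ∈ T \ Pr := Finset.mem_sdiff.2 ⟨hST hω₀, hdisj ω₀ hω₀⟩
      have := Finset.card_pos.2 ⟨ω₀, h1⟩
      omega
  | succ n ih =>
    intro S Pr hmeas hST hPrT hdisj hord hU hcard
    by_cases hSG : S \ G = ∅
    · refine ⟨S, Finset.sdiff_eq_empty_iff_subset.1 hSG, hU, ?_⟩
      have := Finset.card_le_card hPrT
      omega
    · obtain ⟨ω₀, hω₀SG, hmax⟩ :=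
        Finset.exists_max_image (S \ G) (lay L) (Finset.nonempty_iff_ne_empty.2 hSG)
      have hω₀T : ω₀ ∈ T := hST hω₀SG
      have hω₀U : ω₀ ∈ layersUpTo L L.length := (Finset.mem_sdiff.1 hω₀T).1
      have hω₀G : ω₀ ∉ G := (Finset.mem_sdiff.1 hω₀T).2
      have hω₀S : ω₀ ∈ S := (Finset.mem_sdiff.1 hω₀SG).1
      have hlay := lay_spec (lay_exists hF0 hω₀U hω₀G)
      obtain ⟨hl1, hllt, hlmem⟩ := hlay
      obtain ⟨A, hA, B, hB, hres⟩ := hcons (lay L ω₀) hl1 hllt ω₀ hlmem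
      -- A is in layer (lay L ω₀ - 1)
      have hA' : A ∈ G ∨ (A ∈ T ∧ lay L A < lay L ω₀) := by
        by_cases hAG : A ∈ G
        · exact Or.inl hAG
        · right
          have hj1 : 1 ≤ lay L ω₀ - 1 := by
            rcases Nat.lt_or_ge (lay L ω₀) 2 with h | h
            · exfalso
              have h0 : lay L ω₀ - 1 = 0 := by omega
              rw [h0] at hA
              exact hAG (hF0 hA)
            · omega
          have hjlt : lay L ω₀ - 1 < L.length := by omega
          have hAU : A ∈ layersUpTo L L.length := mem_layersUpTo.2 ⟨_, hjlt, hA⟩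
          refine ⟨Finset.mem_sdiff.2 ⟨hAU, hAG⟩, ?_⟩
          have := lay_le hj1 hjlt hA
          omega
      have hB' : B ∈ G ∨ (B ∈ T ∧ lay L B < lay L ω₀) := by
        by_cases hBG : B ∈ G
        · exact Or.inl hBG
        · right
          obtain ⟨j', hj', hBmem⟩ := mem_layersUpTo.1 hB
          have hj'1 : 1 ≤ j' := by
            rcases Nat.eq_zero_or_pos j' with rfl | h
            · exact absurd (hF0 hBmem) hBG
            · exact h
          have hj'lt : j' < L.length := lt_trans hj' hllt
          have hBU : B ∈ layersUpTo L L.length := mem_layersUpTo.2 ⟨_, hj'lt, hBmem⟩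
          refine ⟨Finset.mem_sdiff.2 ⟨hBU, hBG⟩, ?_⟩
          have := lay_le hj'1 hj'lt hBmem
          omega
      have hAne : A ≠ ω₀ := by
        rcases hA' with h | ⟨-, h⟩
        · rintro rfl; exact hω₀G h
        · rintro rfl; omega
      have hBne : B ≠ ω₀ := by
        rcases hB' with h | ⟨-, h⟩
        · rintro rfl; exact hω₀G h
        · rintro rfl; omega
      set S' := insert A (insert B (S.erase ω₀)) with hS'def
      set Pr' := insert ω₀ Pr with hPr'def
      -- membership analysis for S' \ G
      have hmemS' : ∀ x ∈ S' \ G, x = A ∨ x = B ∨ x ∈ S \ G := by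
        intro x hx
        obtain ⟨hx1, hx2⟩ := Finset.mem_sdiff.1 hx
        rcases Finset.mem_insert.1 hx1 with rfl | hx1
        · exact Or.inl rfl
        rcases Finset.mem_insert.1 hx1 with rfl | hx1
        · exact Or.inr (Or.inl rfl)
        · exact Or.inr (Or.inr (Finset.mem_sdiff.2 ⟨Finset.mem_of_mem_erase hx1, hx2⟩))
      have hlayS' : ∀ x ∈ S' \ G, lay L x ≤ lay L ω₀ := by
        intro x hx
        rcases hmemS' x hx with rfl | rfl | hxS
        · rcases hA' with h | ⟨-, h⟩
          · exact absurd h (Finset.mem_sdiff.1 hx).2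
          · omega
        · rcases hB' with h | ⟨-, h⟩
          · exact absurd h (Finset.mem_sdiff.1 hx).2
          · omega
        · exact hmax x hxS
      have hω₀Pr : ω₀ ∉ Pr := hdisj ω₀ hω₀SG
      -- apply IH
      apply ih S' Pr'
      · -- measure
        have hsub : T \ Pr' ⊆ (T \ Pr).erase ω₀ := by
          intro x hx
          obtain ⟨hx1, hx2⟩ := Finset.mem_sdiff.1 hx
          simp only [hPr'def, Finset.mem_insert, not_or] at hx2
          exact Finset.mem_erase.2 ⟨hx2.1, Finset.mem_sdiff.2 ⟨hx1, hx2.2⟩⟩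
        have h1 : ω₀ ∈ T \ Pr := Finset.mem_sdiff.2 ⟨hω₀T, hω₀Pr⟩
        have h2 := Finset.card_le_card hsub
        rw [Finset.card_erase_of_mem h1] at h2
        omega
      · -- S' \ G ⊆ T
        intro x hx
        rcases hmemS' x hx with rfl | rfl | hxS
        · rcases hA' with h | ⟨h, -⟩
          · exact absurd h (Finset.mem_sdiff.1 hx).2
          · exact h
        · rcases hB' with h | ⟨h, -⟩
          · exact absurd h (Finset.mem_sdiff.1 hx).2
          · exact h
        · exact hST hxS
      · -- Pr' ⊆ T
        intro x hx
        rcases Finset.mem_insert.1 hx with rfl | hx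
        · exact hω₀T
        · exact hPrT hx
      · -- disjointness
        intro x hx hxPr'
        rcases Finset.mem_insert.1 hxPr' with rfl | hxPr
        · -- x = ω₀
          rcases hmemS' x hx with rfl | rfl | hxS
          · rcases hA' with h | ⟨-, h⟩
            · exact hω₀G h
            · omega
          · rcases hB' with h | ⟨-, h⟩
            · exact hω₀G h
            · omega
          · have hx1 := (Finset.mem_sdiff.1 hx).1
            rcases Finset.mem_insert.1 hx1 with h | hx1
            · exact hAne h.symm
            rcases Finset.mem_insert.1 hx1 with h | hx1
            · exact hBne h.symm
            · exact (Finset.mem_erase.1 hx1).1 rfl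
        · -- x ∈ Pr
          have hle : lay L ω₀ ≤ lay L x := hord x hxPr ω₀ hω₀SG
          rcases hmemS' x hx with rfl | rfl | hxS
          · rcases hA' with h | ⟨-, h⟩
            · exact absurd h (Finset.mem_sdiff.1 hx).2
            · omega
          · rcases hB' with h | ⟨-, h⟩
            · exact absurd h (Finset.mem_sdiff.1 hx).2
            · omega
          · exact hdisj x hxS hxPr
      · -- order invariant
        intro ρ hρ ω hω
        have h1 : lay L ω ≤ lay L ω₀ := hlayS' ω hω
        rcases Finset.mem_insert.1 hρ with rfl | hρ
        · exact h1
        · exact le_trans h1 (hord ρ hρ ω₀ hω₀SG)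
      · -- unsat
        rintro ⟨m, hm⟩
        apply hU
        refine ⟨m, fun ω hω => ?_⟩
        by_cases hωeq : ω = ω₀
        · subst hωeq
          have hmA : SatClause m A := hm A (Finset.mem_insert_self _ _)
          have hmB : SatClause m B :=
            hm B (Finset.mem_insert_of_mem (Finset.mem_insert_self _ _))
          exact resolvent_sound hres hmA hmB
        · exact hm ω (Finset.mem_insert_of_mem (Finset.mem_insert_of_mem
            (Finset.mem_erase.2 ⟨hωeq, hω⟩)))
      · -- cards
        have h1 : S'.card ≤ (S.erase ω₀).card + 2 :=
          le_trans (Finset.card_insert_le _ _)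
            (by have := Finset.card_insert_le B (S.erase ω₀); omega)
        rw [Finset.card_erase_of_mem hω₀S] at h1
        have h2 : Pr'.card = Pr.card + 1 := Finset.card_insert_of_notMem hω₀Pr
        have h3 : 1 ≤ S.card := Finset.card_pos.2 ⟨ω₀, hω₀S⟩
        omega

/-- Remaining-length lower bound. -/
theorem remaining_length_bound (F : CFormula) (hF : Unsat F) (P : Subproblem)
    (L : List CFormula) (hL : CompatibleProof F P L) :
    sInf {k : ℕ | ∃ S : CFormula, S ⊆ Frontier P.known ∧ Unsat S ∧ k = S.card - 1}
      ≤ (layersUpTo L L.length \ P.known).card := by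
  obtain ⟨⟨hhead, ⟨k0, hk01, hk0lt, hbot⟩, hcons, -⟩, ⟨k, hklt, hcur, hprev, -⟩, -⟩ := hL
  have hF0 : L.getD 0 ∅ = F := by
    cases L with
    | nil => simp at hklt
    | cons a l => simp_all
  have hFK : F ⊆ P.known := by
    rcases Nat.eq_zero_or_pos k with rfl | hk0
    · have hFc : F = P.current := by rw [← hF0, hcur]
      rw [hFc]
      intro x hx
      simp only [Subproblem.known, Finset.mem_union]
      tauto
    · intro ω hω
      have h1 : ω ∈ layersUpTo L k := mem_layersUpTo.2 ⟨0, hk0, hF0 ▸ hω⟩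
      rw [hprev] at h1
      simp only [Subproblem.known, Finset.mem_union]
      tauto
  have hF0G : L.getD 0 ∅ ⊆ P.known := hF0 ▸ hFK
  have hbotU : emptyClause ∈ layersUpTo L L.length := mem_layersUpTo.2 ⟨k0, hk0lt, hbot⟩
  by_cases hbG : emptyClause ∈ P.known
  · have hmem : (0 : ℕ) ∈ {k : ℕ | ∃ S : CFormula,
        S ⊆ Frontier P.known ∧ Unsat S ∧ k = S.card - 1} := by
      refine ⟨{emptyClause}, ?_, unsat_singleton_empty, by simp⟩
      rw [Finset.singleton_subset_iff, Frontier, Finset.mem_filter]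
      refine ⟨hbG, ?_⟩
      rintro ⟨ω', -, hss⟩
      exact Finset.not_ssubset_empty _ hss
    exact le_trans (Nat.sInf_le hmem) (Nat.zero_le _)
  · obtain ⟨S', hS'G, hS'unsat, hS'card⟩ :=
      main_rec P.known L hF0G hcons
        ((layersUpTo L L.length \ P.known) \ ∅).card {emptyClause} ∅ le_rfl
        (by
          intro x hx
          obtain ⟨hx1, hx2⟩ := Finset.mem_sdiff.1 hx
          rw [Finset.mem_singleton] at hx1
          subst hx1
          exact Finset.mem_sdiff.2 ⟨hbotU, hx2⟩)
        (by simp) (by simp) (by simp) unsat_singleton_empty (by simp)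
    obtain ⟨S'', hS''F, hS''unsat, hS''card⟩ :=
      frontier_shrink P.known S' hS'G hS'unsat
    have hmem : S''.card - 1 ∈ {k : ℕ | ∃ S : CFormula,
        S ⊆ Frontier P.known ∧ Unsat S ∧ k = S.card - 1} :=
      ⟨S'', hS''F, hS''unsat, rfl⟩
    refine le_trans (Nat.sInf_le hmem) ?_
    omega

end
end

section
/- Frontier invariance of the smallest unsatisfiable subset: let F be an UNSAT formula and U ⊆ Frontier(F). Then min{#S : U ⊆ S ⊆ F, S is UNSAT} = min{#S : U ⊆ S ⊆ Frontier(F), S is UNSAT}. -/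
open scoped Classical

noncomputable section

lemma exists_frontier_subset_s18 (F : CFormula) (ω : Clause) (hω : ω ∈ F) :
    ∃ ω' ∈ Frontier F, ω'.1 ⊆ ω.1 := by
  by_cases h : ∃ ω'' ∈ F, ω''.1 ⊂ ω.1
  · obtain ⟨ω'', h1, h2⟩ := h
    obtain ⟨ω', h3, h4⟩ := exists_frontier_subset_s18 F ω'' h1
    exact ⟨ω', h3, h4.trans h2.subset⟩
  · exact ⟨ω, Finset.mem_filter.2 ⟨hω, h⟩, subset_rfl⟩
termination_by ω.1.card
decreasing_by exact Finset.card_lt_card h2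

lemma frontier_subset (F : CFormula) : Frontier F ⊆ F := Finset.filter_subset _ _

lemma frontier_reduce (F : CFormula) (S : CFormula) (hU : ∀ u ∈ S, u ∈ Frontier F → True)
    (U : CFormula) (hUS : U ⊆ S) (hUF : U ⊆ Frontier F) (hSF : S ⊆ F) (hS : Unsat S) :
    ∃ S' : CFormula, U ⊆ S' ∧ S' ⊆ Frontier F ∧ Unsat S' ∧ S'.card ≤ S.card := by
  classical
  set f : Clause → Clause := fun ω =>
    if h : ω ∈ F ∧ ω ∉ Frontier F then (exists_frontier_subset_s18 F ω h.1).choose else ω with hf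
  have hfF : ∀ ω ∈ F, f ω ∈ Frontier F ∧ (f ω).1 ⊆ ω.1 := by
    intro ω hω
    by_cases h : ω ∈ F ∧ ω ∉ Frontier F
    · have := (exists_frontier_subset_s18 F ω h.1).choose_spec
      simp only [hf, dif_pos h]
      exact ⟨this.1, this.2⟩
    · have hωf : ω ∈ Frontier F := by tauto
      simp only [hf, dif_neg h]
      exact ⟨hωf, subset_rfl⟩
  have hfix : ∀ ω ∈ Frontier F, f ω = ω := by
    intro ω hω
    have : ¬(ω ∈ F ∧ ω ∉ Frontier F) := by tauto
    simp only [hf, dif_neg this]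
  refine ⟨S.image f, ?_, ?_, ?_, Finset.card_image_le⟩
  · intro u hu
    exact Finset.mem_image.2 ⟨u, hUS hu, hfix u (hUF hu)⟩
  · intro ω hω
    obtain ⟨a, ha, rfl⟩ := Finset.mem_image.1 hω
    exact (hfF a (hSF ha)).1
  · intro ⟨m, hm⟩
    apply hS
    refine ⟨m, fun C hC => ?_⟩
    have h1 := hm (f C) (Finset.mem_image.2 ⟨C, hC, rfl⟩)
    obtain ⟨l, hl, hl2⟩ := h1
    exact ⟨l, (hfF C (hSF hC)).2 hl, hl2⟩

/-- Frontier invariance of the smallest unsatisfiable subset. -/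
theorem smus_frontier_invariance (F : CFormula) (hF : Unsat F) (U : CFormula)
    (hU : U ⊆ Frontier F) :
    sInf {k : ℕ | ∃ S : CFormula, U ⊆ S ∧ S ⊆ F ∧ Unsat S ∧ k = S.card} =
    sInf {k : ℕ | ∃ S : CFormula, U ⊆ S ∧ S ⊆ Frontier F ∧ Unsat S ∧ k = S.card} := by
  have hUF : U ⊆ F := hU.trans (frontier_subset F)
  have hLne : F.card ∈ {k : ℕ | ∃ S : CFormula, U ⊆ S ∧ S ⊆ F ∧ Unsat S ∧ k = S.card} :=
    ⟨F, hUF, subset_rfl, hF, rfl⟩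
  have hRne : ∃ k, k ∈ {k : ℕ | ∃ S : CFormula, U ⊆ S ∧ S ⊆ Frontier F ∧ Unsat S ∧ k = S.card} := by
    obtain ⟨S', h1, h2, h3, _⟩ := frontier_reduce F F (fun _ _ _ => trivial) U hUF hU subset_rfl hF
    exact ⟨S'.card, S', h1, h2, h3, rfl⟩
  apply le_antisymm
  · obtain ⟨k, hk⟩ := hRne
    obtain ⟨S, h1, h2, h3, h4⟩ := Nat.sInf_mem ⟨k, hk⟩
    exact Nat.sInf_le ⟨S, h1, h2.trans (frontier_subset F), h3, h4⟩
  · obtain ⟨S, h1, h2, h3, h4⟩ := Nat.sInf_mem ⟨F.card, hLne⟩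
    obtain ⟨S', g1, g2, g3, g4⟩ := frontier_reduce F S (fun _ _ _ => trivial) U h1 hU h2 h3
    calc sInf {k : ℕ | ∃ S : CFormula, U ⊆ S ∧ S ⊆ Frontier F ∧ Unsat S ∧ k = S.card}
        ≤ S'.card := Nat.sInf_le ⟨S', g1, g2, g3, rfl⟩
      _ ≤ S.card := g4
      _ = _ := h4.symm

end
end
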